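/- Let T > 0, let u : [0,T] → ℝ^d be continuously differentiable with ‖u(t)‖ = 1 for all t ∈ [0,T], and let v : [0,T] → ℝ^d be such that for every t ∈ [0,T], v(t) lies in the convex hull of {∇p_i(u(t)) : i active at u(t)} and u′(t) = v(t) − ⟨v(t), u(t)⟩·u(t). Then m(u(T)) − m(u(0)) = ∫₀ᵀ ‖u′(t)‖² dt; in particular the margin is nondecreasing along the curve: m(u(T)) ≥ m(u(0)). -/

import Mathlib

open scoped RealInnerProductSpace

open Set Topology Filter

/-- From membership in a convex hull, extract an element of the set whose inner
product with a given vector is at most that of the point. -/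
private theorem hull_exists_le {E : Type*} [NormedAddCommGroup E] [InnerProductSpace ℝ E]
    {S : Set E} {v : E} (hv : v ∈ convexHull ℝ S) (y : E) :
    ∃ w ∈ S, ⟪w, y⟫ ≤ ⟪v, y⟫ := by
  by_contra h
  push_neg at h
  have hlin : IsLinearMap ℝ (fun w : E => ⟪w, y⟫) :=
    ⟨fun a b => inner_add_left a b y, fun c a => real_inner_smul_left a y c⟩
  have hsub : S ⊆ {w | ⟪v, y⟫ < ⟪w, y⟫} := fun w hw => h w hw
  have hconv : Convex ℝ {w : E | ⟪v, y⟫ < ⟪w, y⟫} := convex_halfSpace_gt hlin _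
  have h2 : ⟪v, y⟫ < ⟪v, y⟫ := convexHull_min hsub hconv hv
  exact lt_irrefl _ h2

private theorem hull_exists_ge {E : Type*} [NormedAddCommGroup E] [InnerProductSpace ℝ E]
    {S : Set E} {v : E} (hv : v ∈ convexHull ℝ S) (y : E) :
    ∃ w ∈ S, ⟪v, y⟫ ≤ ⟪w, y⟫ := by
  by_contra h
  push_neg at h
  have hlin : IsLinearMap ℝ (fun w : E => ⟪w, y⟫) :=
    ⟨fun a b => inner_add_left a b y, fun c a => real_inner_smul_left a y c⟩
  have hsub : S ⊆ {w | ⟪w, y⟫ < ⟪v, y⟫} := fun w hw => h w hw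
  have hconv : Convex ℝ {w : E | ⟪w, y⟫ < ⟪v, y⟫} := convex_halfSpace_lt hlin _
  have h2 : ⟪v, y⟫ < ⟪v, y⟫ := convexHull_min hsub hconv hv
  exact lt_irrefl _ h2

/-- Key comparison lemma: if at every point of `[a,b)` the function `f` is touched from
above by a differentiable function with derivative at most `g`, then
`f b - f a ≤ ∫ g`. -/
private theorem slope_key {f g : ℝ → ℝ} {a b : ℝ} (hab : a ≤ b)
    (hf : ContinuousOn f (Set.Icc a b)) (hg : Continuous g)
    (H : ∀ x ∈ Set.Ico a b, ∃ (q : ℝ → ℝ) (q' : ℝ), HasDerivAt q q' x ∧ q x = f x ∧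
      (∀ z, f z ≤ q z) ∧ q' ≤ g x) :
    f b - f a ≤ ∫ t in a..b, g t := by
  have key : ∀ ε : ℝ, 0 < ε → f b - f a ≤ (∫ t in a..b, g t) + ε * (b - a) := by
    intro ε hε
    set B : ℝ → ℝ := fun x => f a + (∫ t in a..x, g t) + ε * (x - a) with hBdef
    have hB' : ∀ x, HasDerivAt B (g x + ε) x := by
      intro x
      have h1 : HasDerivAt (fun y => ∫ t in a..y, g t) (g x) x :=
        (hg.integral_hasStrictDerivAt a x).hasDerivAt
      have h2 : HasDerivAt (fun y : ℝ => ε * (y - a)) ε x := by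
        simpa using ((hasDerivAt_id x).sub_const a).const_mul ε
      exact (h1.const_add (f a)).add h2
    have hf' : ∀ x ∈ Set.Ico a b, ∀ r, g x < r → ∃ᶠ z in 𝓝[>] x, slope f x z < r := by
      intro x hx r hr
      obtain ⟨q, q', hq, hqx, hle, hq'⟩ := H x hx
      have htend : ∀ᶠ z in 𝓝[≠] x, slope q x z < r :=
        (hasDerivAt_iff_tendsto_slope.1 hq).eventually_lt_const (lt_of_le_of_lt hq' hr)
      have hsub : 𝓝[>] x ≤ 𝓝[≠] x :=
        nhdsWithin_mono x fun z hz => ne_of_gt hz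
      have hev : ∀ᶠ z in 𝓝[>] x, slope f x z < r := by
        filter_upwards [htend.filter_mono hsub, self_mem_nhdsWithin] with z hz hz'
        have hxz : (0 : ℝ) < z - x := sub_pos.2 (hz' : x < z)
        have h1 : slope f x z ≤ slope q x z := by
          rw [slope_def_field, slope_def_field]
          apply div_le_div_of_nonneg_right ?_ hxz.le |>.trans_eq rfl
          · linarith [hle z, hqx.le, hqx.ge]
        exact lt_of_le_of_lt h1 hz
      exact hev.frequently
    have ha : f a ≤ B a := by simp [hBdef]
    have hbound : ∀ x ∈ Set.Ico a b, f x = B x → g x < g x + ε := fun x _ _ => by linarith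
    have main := image_le_of_liminf_slope_right_lt_deriv_boundary (f := f) (f' := g)
      (B := B) (B' := fun x => g x + ε) hf hf' ha hB' hbound
    have hfb := main (right_mem_Icc.2 hab)
    simp only [hBdef] at hfb
    linarith
  by_cases hba : a = b
  · subst hba
    simp
  have hlt : a < b := lt_of_le_of_ne hab hba
  refine le_of_forall_pos_le_add fun ε hε => ?_
  have hε' : 0 < ε / (b - a) := div_pos hε (by linarith)
  have := key (ε / (b - a)) hε'
  have : f b - f a ≤ (∫ t in a..b, g t) + ε := by
    rw [div_mul_cancel₀] at this
    · linarith
    · linarith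
  linarith

/-- Along a solution of the projected flow driven by convex combinations of the
active gradients, the margin increases with derivative ‖u′‖². -/
theorem stmt_16 {d n : ℕ} (hd : 0 < d) (hn : 0 < n)
    (p : Fin n → EuclideanSpace ℝ (Fin d) → ℝ)
    (hp : ∀ i, ContDiff ℝ 1 (p i))
    (T : ℝ) (hT : 0 < T)
    (u u' : ℝ → EuclideanSpace ℝ (Fin d))
    (hderiv : ∀ t ∈ Set.Icc (0 : ℝ) T, HasDerivAt u (u' t) t)
    (hcont : ContinuousOn u' (Set.Icc (0 : ℝ) T))
    (hsphere : ∀ t ∈ Set.Icc (0 : ℝ) T, ‖u t‖ = 1)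
    (v : ℝ → EuclideanSpace ℝ (Fin d))
    (hv : ∀ t ∈ Set.Icc (0 : ℝ) T,
      v t ∈ convexHull ℝ
          {g | ∃ i, p i (u t) = (⨅ j, p j (u t)) ∧ g = gradient (p i) (u t)} ∧
        u' t = v t - ⟪v t, u t⟫ • u t) :
    ((⨅ j, p j (u T)) - (⨅ j, p j (u 0)) = ∫ t in (0 : ℝ)..T, ‖u' t‖ ^ 2) ∧
      (⨅ j, p j (u 0)) ≤ ⨅ j, p j (u T) := by
  have hnn : Nonempty (Fin n) := ⟨⟨0, hn⟩⟩
  set f : ℝ → ℝ := fun t => ⨅ j, p j (u t) with hfdef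
  have hbdd : ∀ t, BddBelow (Set.range fun j => p j (u t)) :=
    fun t => (Set.finite_range _).bddBelow
  have hfle : ∀ t i, f t ≤ p i (u t) := fun t i => ciInf_le (hbdd t) i
  have hu : ContinuousOn u (Set.Icc 0 T) :=
    fun t ht => (hderiv t ht).continuousAt.continuousWithinAt
  have hfinf' : ∀ t, f t = Finset.univ.inf' Finset.univ_nonempty (fun j => p j (u t)) :=
    fun t => (Finset.inf'_univ_eq_ciInf _).symm
  have hfcont : ContinuousOn f (Set.Icc 0 T) := by
    have h1 : ContinuousOn
        (fun t => Finset.univ.inf' Finset.univ_nonempty (fun j => p j (u t)))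
        (Set.Icc 0 T) :=
      ContinuousOn.finset_inf'_apply Finset.univ_nonempty
        fun i _ => (hp i).continuous.comp_continuousOn hu
    exact h1.congr fun t _ => hfinf' t
  -- derivative of p i ∘ u
  have hq : ∀ x ∈ Set.Icc (0:ℝ) T, ∀ i,
      HasDerivAt (fun t => p i (u t)) (⟪gradient (p i) (u x), u' x⟫) x := by
    intro x hx i
    have hfd : HasFDerivAt (p i) (fderiv ℝ (p i) (u x)) (u x) :=
      (((hp i).differentiable one_ne_zero) (u x)).hasFDerivAt
    have hcomp := hfd.comp_hasDerivAt x (hderiv x hx)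
    have heq : ⟪gradient (p i) (u x), u' x⟫ = fderiv ℝ (p i) (u x) (u' x) :=
      InnerProductSpace.toDual_symm_apply
    rw [heq]
    exact hcomp
  -- inner product identities
  have horth : ∀ x ∈ Set.Icc (0:ℝ) T, ⟪u x, u' x⟫ = 0 := by
    intro x hx
    rw [(hv x hx).2, inner_sub_right, real_inner_smul_right, real_inner_comm (u x) (v x),
      real_inner_self_eq_norm_sq, hsphere x hx]
    ring
  have hvi : ∀ x ∈ Set.Icc (0:ℝ) T, ⟪v x, u' x⟫ = ‖u' x‖ ^ 2 := by
    intro x hx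
    have h2 := (hv x hx).2
    set c : ℝ := ⟪v x, u x⟫ with hc
    have hveq : v x = u' x + c • u x := by rw [h2]; abel
    calc ⟪v x, u' x⟫ = ⟪u' x + c • u x, u' x⟫ := by rw [← hveq]
      _ = ⟪u' x, u' x⟫ + c * ⟪u x, u' x⟫ := by
          rw [inner_add_left, real_inner_smul_left]
      _ = ‖u' x‖ ^ 2 := by rw [horth x hx, real_inner_self_eq_norm_sq]; ring
  -- globalized continuous version of ‖u'‖²
  set c : ℝ → ℝ := fun t => max 0 (min t T) with hcdef
  have hc : Continuous c := continuous_const.max (continuous_id.min continuous_const)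
  have hcmem : ∀ t, c t ∈ Set.Icc (0:ℝ) T :=
    fun t => ⟨le_max_left _ _, max_le hT.le (min_le_right _ _)⟩
  have hcid : ∀ t ∈ Set.Icc (0:ℝ) T, c t = t := by
    intro t ht
    simp only [hcdef]
    rw [min_eq_left ht.2, max_eq_right ht.1]
  set g : ℝ → ℝ := fun t => ‖u' (c t)‖ ^ 2 with hgdef
  have hgcont : Continuous g := ((hcont.comp_continuous hc hcmem).norm).pow 2
  have hgval : ∀ t ∈ Set.Icc (0:ℝ) T, g t = ‖u' t‖ ^ 2 := by
    intro t ht; simp only [hgdef]; rw [hcid t ht]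
  -- Direction 1 : f T - f 0 ≤ ∫ g
  have dir1 : f T - f 0 ≤ ∫ t in (0:ℝ)..T, g t := by
    apply slope_key hT.le hfcont hgcont
    intro x hx
    have hx' : x ∈ Set.Icc (0:ℝ) T := Set.Ico_subset_Icc_self hx
    obtain ⟨w, hwS, hwle⟩ := hull_exists_le (hv x hx').1 (u' x)
    obtain ⟨i, hact, rfl⟩ := hwS
    refine ⟨fun t => p i (u t), _, hq x hx' i, hact, fun z => hfle z i, ?_⟩
    rw [hgval x hx']
    calc ⟪gradient (p i) (u x), u' x⟫ ≤ ⟪v x, u' x⟫ := hwle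
      _ = ‖u' x‖ ^ 2 := hvi x hx'
  -- Direction 2 : ∫ g ≤ f T - f 0, via time reversal
  have dir2 : (∫ t in (0:ℝ)..T, g t) ≤ f T - f 0 := by
    have hrefl : ∀ z ∈ Set.Icc (0:ℝ) T, T - z ∈ Set.Icc (0:ℝ) T := by
      intro z hz
      constructor <;> [linarith [hz.2]; linarith [hz.1]]
    have hFcont : ContinuousOn (fun z => f (T - z)) (Set.Icc 0 T) :=
      hfcont.comp (continuous_const.sub continuous_id).continuousOn hrefl
    have hGcont : Continuous (fun z => -g (T - z)) :=
      (hgcont.comp (continuous_const.sub continuous_id)).neg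
    have key := slope_key (f := fun z => f (T - z)) (g := fun z => -g (T - z))
      hT.le hFcont hGcont ?_
    · have hint : (∫ z in (0:ℝ)..T, -g (T - z)) = -∫ t in (0:ℝ)..T, g t := by
        rw [intervalIntegral.integral_neg]
        congr 1
        have := intervalIntegral.integral_comp_sub_left (a := (0:ℝ)) (b := T) g T
        simpa using this
      rw [hint] at key
      simp only [sub_zero, sub_self] at key
      linarith
    · intro x hx
      have hx' : T - x ∈ Set.Icc (0:ℝ) T := ⟨by linarith [hx.2], by linarith [hx.1]⟩
      obtain ⟨w, hwS, hwge⟩ := hull_exists_ge (hv (T - x) hx').1 (u' (T - x))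
      obtain ⟨i, hact, rfl⟩ := hwS
      have hmap : HasDerivAt (fun z : ℝ => T - z) (-1) x := by
        simpa using (hasDerivAt_id x).const_sub T
      have hcomp : HasDerivAt (fun z : ℝ => p i (u (T - z)))
          (⟪gradient (p i) (u (T - x)), u' (T - x)⟫ * (-1)) x :=
        HasDerivAt.comp x (hq (T - x) hx' i) hmap
      refine ⟨fun z => p i (u (T - z)), _, hcomp, hact, fun z => hfle (T - z) i, ?_⟩
      have h1 : g (T - x) ≤ ⟪gradient (p i) (u (T - x)), u' (T - x)⟫ := by
        rw [hgval (T - x) hx']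
        calc ‖u' (T - x)‖ ^ 2 = ⟪v (T - x), u' (T - x)⟫ := (hvi (T - x) hx').symm
          _ ≤ _ := hwge
      show ⟪gradient (p i) (u (T - x)), u' (T - x)⟫ * (-1) ≤ -g (T - x)
      linarith
  have hinteq : (∫ t in (0:ℝ)..T, g t) = ∫ t in (0:ℝ)..T, ‖u' t‖ ^ 2 := by
    apply intervalIntegral.integral_congr
    intro t ht
    rw [Set.uIcc_of_le hT.le] at ht
    exact hgval t ht
  have heq : f T - f 0 = ∫ t in (0:ℝ)..T, ‖u' t‖ ^ 2 := by
    rw [← hinteq]; linarith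
  refine ⟨heq, ?_⟩
  have hnonneg : (0:ℝ) ≤ ∫ t in (0:ℝ)..T, ‖u' t‖ ^ 2 :=
    intervalIntegral.integral_nonneg hT.le fun t _ => sq_nonneg _
  have : f T - f 0 ≥ 0 := heq ▸ hnonneg
  linarith
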